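/- arXiv:2106.08485 — 2 statements merged into one kernel-verified Lean document; each statement's English description precedes it below -/
import Mathlib

section
/- Let S be an affine progression in I = [s, s+p) with difference -q (negative difference, q > 0, gcd(p,q)=1) and break point b. Then there exists an integer c such that for every x with x, x-q ∈ I: |S ∩ (x-q, x]| = c if x < b, and |S ∩ (x-q, x]| = c + 1 if x ≥ b. -/
/-- Least positive residue of `a` modulo `w` (taking values in `1, …, w` for `w > 0`). -/
def lpr (a w : ℤ) : ℤ := (a - 1) % w + 1

private lemma pdiv_eq {p : ℤ} (hp : 0 < p) (K r : ℤ) (h0 : 0 ≤ r) (h1 : r < p) :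
    (p * K + r) / p = K := by
  rw [add_comm, Int.add_mul_ediv_left _ _ (ne_of_gt hp),
    Int.ediv_eq_zero_of_lt h0 h1, zero_add]

private lemma lpr_neg {p : ℤ} (hp : 0 < p) (n : ℤ) : lpr (-n) p = p - n % p := by
  have h := Int.mul_ediv_add_emod n p
  have hm0 : 0 ≤ n % p := Int.emod_nonneg n (ne_of_gt hp)
  have hmp : n % p < p := Int.emod_lt_of_pos n hp
  unfold lpr
  have key : -n - 1 = (p - n % p - 1) + p * (-(n / p) - 1) := by linarith
  rw [key, Int.add_mul_emod_self_left, Int.emod_eq_of_lt (by omega) (by omega)]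
  ring

private lemma ind {p q : ℤ} (hp : 0 < p) (hq : 0 < q) {a : ℤ} (ha1 : 1 ≤ a)
    (ha2 : a + q ≤ p) (j : ℤ) :
    (j * q - a) / p - ((j - 1) * q - a) / p =
      if a ≤ (j * q) % p ∧ (j * q) % p < a + q then 1 else 0 := by
  have h := Int.mul_ediv_add_emod (j * q) p
  set m := (j * q) % p with hm
  set K := (j * q) / p with hK
  have hm0 : 0 ≤ m := Int.emod_nonneg _ (ne_of_gt hp)
  have hmp : m < p := Int.emod_lt_of_pos _ hp
  by_cases h1 : a ≤ m
  · by_cases h2 : m < a + q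
    · have e1 : j * q - a = p * K + (m - a) := by linarith
      have e2 : (j - 1) * q - a = p * (K - 1) + (m - a - q + p) := by linear_combination -h
      rw [e1, e2, pdiv_eq hp _ _ (by omega) (by omega),
        pdiv_eq hp _ _ (by omega) (by omega), if_pos ⟨h1, h2⟩]
      ring
    · have e1 : j * q - a = p * K + (m - a) := by linarith
      have e2 : (j - 1) * q - a = p * K + (m - a - q) := by linear_combination -h
      rw [e1, e2, pdiv_eq hp _ _ (by omega) (by omega),
        pdiv_eq hp _ _ (by omega) (by omega), if_neg (by omega)]
      ring
  · have e1 : j * q - a = p * (K - 1) + (m - a + p) := by linear_combination -h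
    have e2 : (j - 1) * q - a = p * (K - 1) + (m - a - q + p) := by linear_combination -h
    rw [e1, e2, pdiv_eq hp _ _ (by omega) (by omega),
      pdiv_eq hp _ _ (by omega) (by omega), if_neg (by omega)]
    ring

private lemma tele (g : ℤ → ℤ) (n : ℕ) :
    (∑ j ∈ Finset.Icc (1:ℤ) (n:ℤ), (g j - g (j - 1))) = g n - g 0 := by
  induction n with
  | zero => simp
  | succ n ih =>
    have hins : Finset.Icc (1:ℤ) ((n:ℤ)+1) = insert ((n:ℤ)+1) (Finset.Icc 1 (n:ℤ)) := by
      ext z; simp [Finset.mem_Icc]; omega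
    push_cast
    rw [hins, Finset.sum_insert (by simp), ih]
    ring_nf

private lemma count_eq {s p q l x : ℤ} (S : Finset ℤ) (hq : 0 < q) (hqp : q < p)
    (hcop : IsCoprime p q) (hl0 : 0 ≤ l) (hl : l < p)
    (hS : ∀ y : ℤ, y ≠ s → (y ∈ S ↔ ∃ j : ℤ, 1 ≤ j ∧ j ≤ l ∧ y = s + lpr (-(j * q)) p))
    (hx1 : s ≤ x - q) (hx2 : x < s + p) :
    ((Finset.Ioc (x - q) x ∩ S).card : ℤ) = (l * q + (x - s)) / p := by
  have hp : 0 < p := lt_trans hq hqp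
  set a : ℤ := s + p - x with ha
  have ha1 : 1 ≤ a := by omega
  have ha2 : a + q ≤ p := by omega
  set T := (Finset.Icc (1:ℤ) l).filter
      (fun j => a ≤ (j * q) % p ∧ (j * q) % p < a + q) with hT
  have hset : Finset.Ioc (x - q) x ∩ S = T.image (fun j => s + lpr (-(j * q)) p) := by
    ext y
    simp only [Finset.mem_inter, Finset.mem_Ioc, Finset.mem_image, hT,
      Finset.mem_filter, Finset.mem_Icc]
    constructor
    · rintro ⟨⟨hy1, hy2⟩, hyS⟩
      have hys : y ≠ s := by omega
      obtain ⟨j, hj1, hj2, hj3⟩ := (hS y hys).mp hyS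
      refine ⟨j, ⟨⟨hj1, hj2⟩, ?_⟩, hj3.symm⟩
      rw [lpr_neg hp] at hj3
      have := Int.emod_nonneg (j * q) (ne_of_gt hp)
      have := Int.emod_lt_of_pos (j * q) hp
      omega
    · rintro ⟨j, ⟨⟨hj1, hj2⟩, hcond⟩, rfl⟩
      have hlpr := lpr_neg hp (j * q)
      have := Int.emod_nonneg (j * q) (ne_of_gt hp)
      have := Int.emod_lt_of_pos (j * q) hp
      refine ⟨⟨by omega, by omega⟩, ?_⟩
      rw [hS _ (by omega)]
      exact ⟨j, hj1, hj2, rfl⟩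
  have hinj : Set.InjOn (fun j => s + lpr (-(j * q)) p) T := by
    intro j hj j' hj' hE
    simp only [hT, Finset.coe_filter, Finset.mem_Icc, Set.mem_setOf_eq] at hj hj'
    have hE' : s + lpr (-(j * q)) p = s + lpr (-(j' * q)) p := hE
    rw [lpr_neg hp, lpr_neg hp] at hE'
    have hmod : (j * q) % p = (j' * q) % p := by omega
    have hdvd : p ∣ (j - j') * q := by
      have h0 := Int.emod_eq_emod_iff_emod_sub_eq_zero.mp hmod
      have h1 : p ∣ j * q - j' * q := Int.dvd_of_emod_eq_zero h0
      have : (j - j') * q = j * q - j' * q := by ring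
      rw [this]; exact h1
    have hdvd2 : p ∣ j - j' := hcop.dvd_of_dvd_mul_right hdvd
    obtain ⟨k, hk⟩ := hdvd2
    have hk0 : k = 0 := by
      rcases lt_trichotomy k 0 with h | h | h
      · have : p * k ≤ p * (-1) := mul_le_mul_of_nonneg_left (by omega) (le_of_lt hp)
        have := hj.1.1; have := hj.1.2; have := hj'.1.1; have := hj'.1.2
        linarith
      · exact h
      · have : p * 1 ≤ p * k := mul_le_mul_of_nonneg_left (by omega) (le_of_lt hp)
        have := hj.1.1; have := hj.1.2; have := hj'.1.1; have := hj'.1.2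
        linarith
    rw [hk0, mul_zero] at hk
    omega
  have hsum : ((Finset.Ioc (x - q) x ∩ S).card : ℤ)
      = ∑ j ∈ Finset.Icc (1:ℤ) l,
          ((j * q - a) / p - ((j - 1) * q - a) / p) := by
    rw [hset, Finset.card_image_of_injOn hinj, hT, Finset.card_filter]
    push_cast
    exact Finset.sum_congr rfl fun j _ => (ind hp hq ha1 ha2 j).symm
  have hln : ((l.toNat : ℤ)) = l := Int.toNat_of_nonneg hl0
  have htele := tele (fun j => (j * q - a) / p) l.toNat
  rw [hln] at htele
  rw [hsum, htele]
  have hg0 : ((0:ℤ) * q - a) / p = -1 := by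
    have e : (0:ℤ) * q - a = p * (-1) + (p - a) := by ring
    rw [e, pdiv_eq hp _ _ (by omega) (by omega)]
  have hfin : l * q + (x - s) = (l * q - a) + p * 1 := by omega
  rw [hg0, hfin, Int.add_mul_ediv_left _ _ (ne_of_gt hp)]
  ring

/-- For an affine progression `S` in `I = [s, s+p)` of difference `-q` (with
`q > 0`) and break point `b`, there is an integer `c` such that for
`x, x-q ∈ I`, `|S ∩ (x-q, x]| = c` if `x < b` and `= c + 1` if `x ≥ b`. -/
theorem stmt11 (s p q l b : ℤ) (S : Finset ℤ)
    (hq : 0 < q) (hqp : q < p) (hcop : IsCoprime p q)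
    (hl0 : 0 ≤ l) (hl : l < p)
    (hSsub : ∀ x ∈ S, x ∈ Set.Ico s (s + p))
    (hS : ∀ x : ℤ, x ≠ s →
      (x ∈ S ↔ ∃ j : ℤ, 1 ≤ j ∧ j ≤ l ∧ x = s + lpr (-(j * q)) p))
    (hb : b = if l = 0 then s else s + lpr (-(l * q)) p) :
    ∃ c : ℤ, ∀ x : ℤ, s ≤ x - q → x < s + p →
      (x < b → ((Finset.Ioc (x - q) x ∩ S).card : ℤ) = c) ∧
      (b ≤ x → ((Finset.Ioc (x - q) x ∩ S).card : ℤ) = c + 1) := by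
  have hp : 0 < p := lt_trans hq hqp
  by_cases hl' : l = 0
  · refine ⟨-1, fun x hx1 hx2 => ?_⟩
    have hbs : b = s := by rw [hb, if_pos hl']
    have hcount := count_eq S hq hqp hcop hl0 hl hS hx1 hx2
    subst hl'
    have heq : (0 : ℤ) * q + (x - s) = p * 0 + (x - s) := by ring
    rw [heq, pdiv_eq hp _ _ (by omega) (by omega)] at hcount
    constructor
    · intro hxb; omega
    · intro _; omega
  · have hl1 : 1 ≤ l := by omega
    have hm0 : 0 ≤ (l * q) % p := Int.emod_nonneg _ (ne_of_gt hp)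
    have hmp : (l * q) % p < p := Int.emod_lt_of_pos _ hp
    have hmne : (l * q) % p ≠ 0 := by
      intro h0
      have hd : p ∣ l * q := Int.dvd_of_emod_eq_zero h0
      have hd2 : p ∣ l := hcop.dvd_of_dvd_mul_right hd
      obtain ⟨k, hk⟩ := hd2
      rcases le_or_gt k 0 with hk0 | hk0
      · have : p * k ≤ 0 := mul_nonpos_of_nonneg_of_nonpos (le_of_lt hp) hk0
        linarith
      · have : p * 1 ≤ p * k := mul_le_mul_of_nonneg_left (by omega) (le_of_lt hp)
        linarith
    have hbval : b = s + (p - (l * q) % p) := by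
      rw [hb, if_neg hl', lpr_neg hp]
    refine ⟨(l * q) / p, fun x hx1 hx2 => ?_⟩
    have hcount := count_eq S hq hqp hcop hl0 hl hS hx1 hx2
    constructor
    · intro hxb
      have heq : l * q + (x - s) = p * ((l * q) / p) + ((l * q) % p + (x - s)) := by
        have h := Int.mul_ediv_add_emod (l * q) p; linarith
      rw [hcount, heq, pdiv_eq hp _ _ (by omega) (by omega)]
    · intro hxb
      have heq : l * q + (x - s)
          = p * ((l * q) / p + 1) + ((l * q) % p + (x - s) - p) := by
        have h := Int.mul_ediv_add_emod (l * q) p; linarith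
      rw [hcount, heq, pdiv_eq hp _ _ (by omega) (by omega)]
end

section
/- Let S be an affine progression in I = [s, s+p) with difference εq (ε = ±1) and break point b, and let r = [p]_q. If J = [y, y+q) ⊂ I with y ∈ {s, b, s+p-q}, then S ∩ J is an affine progression in J; its difference is εr if y = b, and -εr otherwise. -/
/-- `S` is an affine progression in `[s, s+w)` of difference `d` and length `l`. -/
def IsAffProg (S : Set ℤ) (s w d l : ℤ) : Prop :=
  S ⊆ Set.Ico s (s + w) ∧
    S \ {s} = {x : ℤ | ∃ j : ℤ, 1 ≤ j ∧ j ≤ l ∧ x = s + lpr (j * d) w}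

lemma lpr_one_le {w : ℤ} (hw : 0 < w) (a : ℤ) : 1 ≤ lpr a w := by
  unfold lpr; have := Int.emod_nonneg (a - 1) (ne_of_gt hw); omega

lemma lpr_le {w : ℤ} (hw : 0 < w) (a : ℤ) : lpr a w ≤ w := by
  unfold lpr; have := Int.emod_lt_of_pos (a - 1) hw; omega

lemma lpr_dvd_sub (w a : ℤ) : w ∣ lpr a w - a := by
  refine ⟨-((a - 1) / w), ?_⟩
  show (a - 1) % w + 1 - a = _
  rw [Int.emod_def]; ring

lemma lpr_eq {w a x : ℤ} (hw : 0 < w) (h1 : 1 ≤ x) (h2 : x ≤ w) (hd : w ∣ a - x) :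
    lpr a w = x := by
  have h3 := lpr_dvd_sub w a
  have h4 : w ∣ lpr a w - x := by
    have := dvd_add h3 hd
    have he : lpr a w - a + (a - x) = lpr a w - x := by ring
    rwa [he] at this
  have h5 := lpr_one_le hw a
  have h6 := lpr_le hw a
  have := Int.eq_zero_of_abs_lt_dvd h4 (abs_lt.mpr ⟨by omega, by omega⟩)
  omega

lemma lpr_le_sub_one {w a : ℤ} (hw : 0 < w) (h : ¬ w ∣ a) : lpr a w ≤ w - 1 := by
  have h1 := lpr_le hw a
  have h2 := lpr_one_le hw a
  by_contra hc
  have heq : lpr a w = w := by omega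
  have h3 := lpr_dvd_sub w a
  rw [heq] at h3
  have : w ∣ a := by
    have := dvd_sub (dvd_refl w) h3
    rwa [sub_sub_cancel] at this
  exact h this

lemma exists_j_iff (p q ε l c t j₀ : ℤ)
    (hp : 0 < p) (hcop : IsCoprime p q) (hε : ε = 1 ∨ ε = -1)
    (hl : l < p)
    (hct1 : 1 ≤ c + t) (hct2 : c + t ≤ p)
    (hcong : p ∣ j₀ * (ε * q) - (c + t))
    (hup : j₀ ≤ p) (hlo : l - p < j₀) :
    (∃ j, 1 ≤ j ∧ j ≤ l ∧ lpr (j * (ε * q)) p = c + t) ↔ (1 ≤ j₀ ∧ j₀ ≤ l) := by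
  constructor
  · rintro ⟨j, hj1, hj2, hj3⟩
    have h1 : p ∣ (c + t) - j * (ε * q) := by
      have := lpr_dvd_sub p (j * (ε * q))
      rwa [hj3] at this
    have h2 : p ∣ ((j₀ - j) * ε) * q := by
      have := dvd_add hcong h1
      have he : j₀ * (ε * q) - (c + t) + ((c + t) - j * (ε * q)) = ((j₀ - j) * ε) * q := by
        ring
      rwa [he] at this
    have h3 : p ∣ (j₀ - j) * ε := hcop.dvd_of_dvd_mul_right h2
    have h4 : p ∣ j₀ - j := by
      rcases hε with rfl | rfl
      · simpa using h3
      · rw [mul_neg_one] at h3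
        exact dvd_neg.mp h3
    have h5 : j₀ - j = 0 := Int.eq_zero_of_abs_lt_dvd h4 (abs_lt.mpr ⟨by omega, by omega⟩)
    omega
  · rintro ⟨h1, h2⟩
    exact ⟨j₀, h1, h2, lpr_eq hp hct1 hct2 hcong⟩

lemma core (q y d' M : ℤ) (F : ℤ → ℤ) (P : ℤ → Prop)
    (hq : 0 < q)
    (hmem : ∀ k, 1 ≤ k → k ≤ q - 1 → 1 ≤ lpr (k * d') q ∧ lpr (k * d') q ≤ q - 1)
    (hinj : ∀ k1 k2, 1 ≤ k1 → k1 ≤ q - 1 → 1 ≤ k2 → k2 ≤ q - 1 →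
        lpr (k1 * d') q = lpr (k2 * d') q → k1 = k2)
    (hmono : ∀ k1 k2, 1 ≤ k1 → k1 < k2 → k2 ≤ q - 1 → F k1 < F k2)
    (hiff : ∀ k, 1 ≤ k → k ≤ q - 1 → (P (lpr (k * d') q) ↔ F k ≤ M)) :
    ∃ l', 0 ≤ l' ∧ l' < q ∧
      {x : ℤ | ∃ t, 1 ≤ t ∧ t ≤ q - 1 ∧ P t ∧ x = y + t} =
      {x : ℤ | ∃ k, 1 ≤ k ∧ k ≤ l' ∧ x = y + lpr (k * d') q} := by
  classical
  have hsurj : ∀ t, 1 ≤ t → t ≤ q - 1 → ∃ k, 1 ≤ k ∧ k ≤ q - 1 ∧ lpr (k * d') q = t := by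
    intro t ht1 ht2
    have hsub : (Finset.Icc 1 (q - 1)).image (fun k => lpr (k * d') q) ⊆ Finset.Icc 1 (q - 1) := by
      intro x hx
      simp only [Finset.mem_image, Finset.mem_Icc] at hx ⊢
      obtain ⟨k, ⟨hk1, hk2⟩, rfl⟩ := hx
      exact hmem k hk1 hk2
    have hcard : (Finset.Icc 1 (q - 1)).card ≤
        ((Finset.Icc 1 (q - 1)).image (fun k => lpr (k * d') q)).card := by
      rw [Finset.card_image_of_injOn]
      intro k1 h1 k2 h2 h
      simp only [Finset.coe_Icc, Set.mem_Icc] at h1 h2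
      exact hinj _ _ h1.1 h1.2 h2.1 h2.2 h
    have heq := Finset.eq_of_subset_of_card_le hsub hcard
    have ht : t ∈ (Finset.Icc 1 (q - 1)).image (fun k => lpr (k * d') q) := by
      rw [heq]; simp only [Finset.mem_Icc]; omega
    simp only [Finset.mem_image, Finset.mem_Icc] at ht
    obtain ⟨k, ⟨h1, h2⟩, h3⟩ := ht
    exact ⟨k, h1, h2, h3⟩
  set K := (Finset.Icc 1 (q - 1)).filter (fun k => F k ≤ M) with hK
  by_cases hKne : K.Nonempty
  · have hmax := Finset.mem_filter.mp
      (show K.max' hKne ∈ Finset.filter (fun k => F k ≤ M) (Finset.Icc 1 (q - 1)) from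
        K.max'_mem hKne)
    rw [Finset.mem_Icc] at hmax
    refine ⟨K.max' hKne, by omega, by omega, ?_⟩
    ext x
    simp only [Set.mem_setOf_eq]
    constructor
    · rintro ⟨t, ht1, ht2, hPt, rfl⟩
      obtain ⟨k, hk1, hk2, hk3⟩ := hsurj t ht1 ht2
      have hFk : F k ≤ M := by
        rw [← hiff k hk1 hk2, hk3]; exact hPt
      have hkK : k ∈ K := by
        rw [hK, Finset.mem_filter, Finset.mem_Icc]; exact ⟨⟨hk1, hk2⟩, hFk⟩
      exact ⟨k, hk1, K.le_max' k hkK, by rw [hk3]⟩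
    · rintro ⟨k, hk1, hk2, rfl⟩
      have hkq : k ≤ q - 1 := le_trans hk2 hmax.1.2
      have hFk : F k ≤ M := by
        rcases eq_or_lt_of_le hk2 with h | h
        · rw [h]; exact hmax.2
        · exact le_trans (le_of_lt (hmono k _ hk1 h hmax.1.2)) hmax.2
      have hP := (hiff k hk1 hkq).mpr hFk
      obtain ⟨hm1, hm2⟩ := hmem k hk1 hkq
      exact ⟨lpr (k * d') q, hm1, hm2, hP, rfl⟩
  · refine ⟨0, le_refl 0, hq, ?_⟩
    ext x
    simp only [Set.mem_setOf_eq]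
    constructor
    · rintro ⟨t, ht1, ht2, hPt, rfl⟩
      obtain ⟨k, hk1, hk2, hk3⟩ := hsurj t ht1 ht2
      have hFk : F k ≤ M := by
        rw [← hiff k hk1 hk2, hk3]; exact hPt
      exfalso
      exact hKne ⟨k, by rw [hK, Finset.mem_filter, Finset.mem_Icc]; exact ⟨⟨hk1, hk2⟩, hFk⟩⟩
    · rintro ⟨k, hk1, hk2, rfl⟩
      omega

lemma key (p q ε η l M a₀ c y d' : ℤ)
    (hq2 : 2 ≤ q) (hqp : q < p) (hcop : IsCoprime p q)
    (hε : ε = 1 ∨ ε = -1) (hη : η = 1 ∨ η = -1)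
    (hl0 : 0 ≤ l) (hl : l < p)
    (hc1 : 0 ≤ c) (hc2 : c + q ≤ p)
    (hd' : d' = -(η * (ε * (p % q))))
    (hcong : p ∣ a₀ * (ε * q) - c)
    (hup : ∀ G, 1 ≤ G → G ≤ p - 1 → a₀ + η * G ≤ p)
    (hlo : ∀ G, 1 ≤ G → G ≤ p - 1 → l - p < a₀ + η * G)
    (hMiff : ∀ G, 1 ≤ G → G ≤ p - 1 → (η * ε = 1 → 2 ≤ G) →
      ((1 ≤ a₀ + η * G ∧ a₀ + η * G ≤ l) ↔ G ≤ M)) :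
    ∃ l', 0 ≤ l' ∧ l' < q ∧
      {x : ℤ | ∃ t, 1 ≤ t ∧ t ≤ q - 1 ∧
          (∃ j, 1 ≤ j ∧ j ≤ l ∧ lpr (j * (ε * q)) p = c + t) ∧ x = y + t} =
      {x : ℤ | ∃ k, 1 ≤ k ∧ k ≤ l' ∧ x = y + lpr (k * d') q} := by
  have hq0 : 0 < q := by omega
  have hp0 : 0 < p := by omega
  have hr0 : 0 ≤ p % q := Int.emod_nonneg p (by omega)
  have hrltq : p % q < q := Int.emod_lt_of_pos p hq0
  have hrne : p % q ≠ 0 := by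
    intro h
    have hdvd : q ∣ p := Int.dvd_of_emod_eq_zero h
    obtain ⟨u, v, huv⟩ := hcop
    have h1 : q ∣ u * p + v * q := dvd_add (hdvd.mul_left u) (Dvd.dvd.mul_left dvd_rfl v)
    rw [huv] at h1
    have := Int.le_of_dvd one_pos h1
    omega
  have hqr : IsCoprime q (p % q) := by
    have h1 : IsCoprime q p := hcop.symm
    have h2 := h1.add_mul_left_right (-(p / q))
    have h3 : p + q * -(p / q) = p % q := by rw [Int.emod_def]; ring
    rwa [h3] at h2
  have hηε : η * ε = 1 ∨ η * ε = -1 := by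
    rcases hε with rfl | rfl <;> rcases hη with rfl | rfl <;> norm_num
  -- q does not divide k * d' for k in range
  have hkd : ∀ k, 1 ≤ k → k ≤ q - 1 → ¬ q ∣ k * d' := by
    intro k hk1 hk2 hdvd
    have h1 : q ∣ k * (p % q) := by
      rcases hε with rfl | rfl <;> rcases hη with rfl | rfl <;> rw [hd'] at hdvd
      · rw [show k * -(1 * (1 * (p % q))) = -(k * (p % q)) by ring] at hdvd
        exact dvd_neg.mp hdvd
      · rw [show k * -(-1 * (1 * (p % q))) = k * (p % q) by ring] at hdvd
        exact hdvd
      · rw [show k * -(1 * (-1 * (p % q))) = k * (p % q) by ring] at hdvd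
        exact hdvd
      · rw [show k * -(-1 * (-1 * (p % q))) = -(k * (p % q)) by ring] at hdvd
        exact dvd_neg.mp hdvd
    have h2 : q ∣ k := hqr.dvd_of_dvd_mul_right h1
    have := Int.le_of_dvd (by omega) h2
    omega
  have hτ : ∀ k, 1 ≤ k → k ≤ q - 1 → 1 ≤ lpr (k * d') q ∧ lpr (k * d') q ≤ q - 1 :=
    fun k h1 h2 => ⟨lpr_one_le hq0 _, lpr_le_sub_one hq0 (hkd k h1 h2)⟩
  have hτinj : ∀ k1 k2, 1 ≤ k1 → k1 ≤ q - 1 → 1 ≤ k2 → k2 ≤ q - 1 →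
      lpr (k1 * d') q = lpr (k2 * d') q → k1 = k2 := by
    intro k1 k2 h1 h2 h3 h4 heq
    have d1 := lpr_dvd_sub q (k1 * d')
    have d2 := lpr_dvd_sub q (k2 * d')
    have h5 : q ∣ (k1 - k2) * d' := by
      have h := dvd_sub d2 d1
      have he : lpr (k2 * d') q - k2 * d' - (lpr (k1 * d') q - k1 * d') = (k1 - k2) * d' := by
        rw [heq]; ring
      rwa [he] at h
    have h6 : q ∣ (k1 - k2) * (p % q) := by
      rcases hε with rfl | rfl <;> rcases hη with rfl | rfl <;> rw [hd'] at h5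
      · rw [show (k1 - k2) * -(1 * (1 * (p % q))) = -((k1 - k2) * (p % q)) by ring] at h5
        exact dvd_neg.mp h5
      · rw [show (k1 - k2) * -(-1 * (1 * (p % q))) = (k1 - k2) * (p % q) by ring] at h5
        exact h5
      · rw [show (k1 - k2) * -(1 * (-1 * (p % q))) = (k1 - k2) * (p % q) by ring] at h5
        exact h5
      · rw [show (k1 - k2) * -(-1 * (-1 * (p % q))) = -((k1 - k2) * (p % q)) by ring] at h5
        exact dvd_neg.mp h5
    have h7 : q ∣ k1 - k2 := hqr.dvd_of_dvd_mul_right h6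
    have := Int.eq_zero_of_abs_lt_dvd h7 (abs_lt.mpr ⟨by omega, by omega⟩)
    omega
  -- divisibility for the index formula
  have hdvdB : ∀ k, q ∣ η * k * p + ε * lpr (k * d') q := by
    intro k
    obtain ⟨u, hu⟩ := lpr_dvd_sub q (k * d')
    obtain ⟨v, hv⟩ : q ∣ p - p % q := ⟨p / q, by rw [Int.emod_def]; ring⟩
    refine ⟨η * k * v + ε * u, ?_⟩
    rcases hε with rfl | rfl <;> rcases hη with rfl | rfl
    · linear_combination k * hv + hu + k * hd'
    · linear_combination (-k) * hv + hu + k * hd'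
    · linear_combination k * hv - hu - k * hd'
    · linear_combination (-k) * hv - hu - k * hd'
  set B : ℤ → ℤ := fun k => (η * k * p + ε * lpr (k * d') q) / q with hBdef
  have hB : ∀ k, q * B k = η * k * p + ε * lpr (k * d') q := by
    intro k
    exact Int.mul_ediv_cancel' (hdvdB k)
  have hqG : ∀ k, q * (η * B k) = k * p + (η * ε) * lpr (k * d') q := by
    intro k
    have h := hB k
    rcases hε with rfl | rfl <;> rcases hη with rfl | rfl
    · linear_combination h
    · linear_combination -h
    · linear_combination h
    · linear_combination -h
  have hGr : ∀ k, 1 ≤ k → k ≤ q - 1 →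
      1 ≤ η * B k ∧ η * B k ≤ p - 1 ∧ (η * ε = 1 → 2 ≤ η * B k) := by
    intro k hk1 hk2
    have hg := hqG k
    obtain ⟨ht1, ht2⟩ := hτ k hk1 hk2
    have hkp : 1 * p ≤ k * p := mul_le_mul_of_nonneg_right hk1 hp0.le
    have hkp2 : k * p ≤ (q - 1) * p := mul_le_mul_of_nonneg_right hk2 hp0.le
    have hG1 : 0 < η * B k := by
      have hpos : 0 < q * (η * B k) := by
        rcases hηε with h | h <;> rw [h] at hg <;> nlinarith
      nlinarith
    have hG2 : η * B k < p := by
      have h2 : q * (η * B k) < q * p := by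
        rcases hηε with h | h <;> rw [h] at hg <;> nlinarith
      exact lt_of_mul_lt_mul_left h2 hq0.le
    refine ⟨by omega, by omega, ?_⟩
    intro hηε1
    rw [hηε1] at hg
    have h3 : q * 1 < q * (η * B k) := by nlinarith
    have := lt_of_mul_lt_mul_left h3 hq0.le
    omega
  have hGmono : ∀ k1 k2, 1 ≤ k1 → k1 < k2 → k2 ≤ q - 1 → η * B k1 < η * B k2 := by
    intro k1 k2 h1 h2 h3
    have hg1 := hqG k1
    have hg2 := hqG k2
    obtain ⟨ha1, ha2⟩ := hτ k1 h1 (by omega)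
    obtain ⟨hb1, hb2⟩ := hτ k2 (by omega) h3
    have hdd : 1 * p ≤ (k2 - k1) * p := mul_le_mul_of_nonneg_right (by omega) hp0.le
    have h4 : q * (η * B k1) < q * (η * B k2) := by
      rcases hηε with h | h <;> rw [h] at hg1 hg2 <;> nlinarith
    exact lt_of_mul_lt_mul_left h4 hq0.le
  have hct : ∀ k, 1 ≤ k → k ≤ q - 1 →
      1 ≤ c + lpr (k * d') q ∧ c + lpr (k * d') q ≤ p := by
    intro k h1 h2
    obtain ⟨a, b⟩ := hτ k h1 h2
    omega
  have hjiff : ∀ k, 1 ≤ k → k ≤ q - 1 →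
      ((∃ j, 1 ≤ j ∧ j ≤ l ∧ lpr (j * (ε * q)) p = c + lpr (k * d') q) ↔ η * B k ≤ M) := by
    intro k hk1 hk2
    obtain ⟨hG1, hG2, hG3⟩ := hGr k hk1 hk2
    have hG1' : 1 ≤ η * B k := hG1
    have hBη : a₀ + B k = a₀ + η * (η * B k) := by
      rcases hη with rfl | rfl <;> ring
    have hcong2 : p ∣ (a₀ + B k) * (ε * q) - (c + lpr (k * d') q) := by
      obtain ⟨w, hw⟩ := hcong
      refine ⟨w + ε * η * k, ?_⟩
      have h := hB k
      rcases hε with rfl | rfl <;> rcases hη with rfl | rfl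
      · linear_combination hw + h
      · linear_combination hw + h
      · linear_combination hw - h
      · linear_combination hw - h
    rw [exists_j_iff p q ε l c (lpr (k * d') q) (a₀ + B k) hp0 hcop hε hl
        (hct k hk1 hk2).1 (hct k hk1 hk2).2 hcong2
        (by rw [hBη]; exact hup _ hG1' hG2) (by rw [hBη]; exact hlo _ hG1' hG2)]
    rw [hBη]
    exact hMiff _ hG1' hG2 hG3
  obtain ⟨l', h0, h1, hset⟩ := core q y d' M (fun k => η * B k)
    (fun t => ∃ j, 1 ≤ j ∧ j ≤ l ∧ lpr (j * (ε * q)) p = c + t)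
    hq0 hτ hτinj hGmono hjiff
  exact ⟨l', h0, h1, hset⟩

/-- Restriction lemma: an affine progression `S` in `I = [s, s+p)` of
difference `εq` and break point `b` restricts to an affine progression on
`J = [y, y+q)` for `y ∈ {s, b, s+p-q}`, of difference `εr` if `y = b` and
`-εr` otherwise, where `r = [p]_q`. -/
theorem stmt13 (s p q l b y : ℤ) (ε : ℤ) (S : Set ℤ)
    (hε : ε = 1 ∨ ε = -1)
    (hq : 0 < q) (hqp : q < p) (hcop : IsCoprime p q)
    (hl0 : 0 ≤ l) (hl : l < p)
    (hS : IsAffProg S s p (ε * q) l)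
    (hb : b = if l = 0 then s else s + lpr (l * (ε * q)) p)
    (hy : y = s ∨ y = b ∨ y = s + p - q)
    (hJl : s ≤ y) (hJr : y + q ≤ s + p) :
    ∃ l' : ℤ, 0 ≤ l' ∧ l' < q ∧
      IsAffProg (S ∩ Set.Ico y (y + q)) y q
        (if y = b then ε * (p % q) else -(ε * (p % q))) l' := by
  have hSsub : S ⊆ Set.Ico s (s + p) := hS.1
  have hSdesc : S \ {s} =
      {x : ℤ | ∃ j : ℤ, 1 ≤ j ∧ j ≤ l ∧ x = s + lpr (j * (ε * q)) p} := hS.2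
  by_cases hq1 : q = 1
  · subst hq1
    refine ⟨0, le_refl 0, by norm_num, ?_⟩
    unfold IsAffProg
    refine ⟨Set.inter_subset_right, ?_⟩
    ext x
    simp only [Set.mem_diff, Set.mem_inter_iff, Set.mem_Ico, Set.mem_singleton_iff,
      Set.mem_setOf_eq]
    constructor
    · rintro ⟨⟨hxS, hx1, hx2⟩, hx3⟩
      exact absurd (by omega : x = y) hx3
    · rintro ⟨j, hj1, hj2, _⟩
      exact absurd hj2 (by omega)
  have hq2 : 2 ≤ q := by omega
  have hDS : (S ∩ Set.Ico y (y + q)) \ {y} =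
      {x : ℤ | ∃ t, 1 ≤ t ∧ t ≤ q - 1 ∧
        (∃ j, 1 ≤ j ∧ j ≤ l ∧ lpr (j * (ε * q)) p = y - s + t) ∧ x = y + t} := by
    ext x
    simp only [Set.mem_diff, Set.mem_inter_iff, Set.mem_Ico, Set.mem_singleton_iff,
      Set.mem_setOf_eq]
    constructor
    · rintro ⟨⟨hxS, hx1, hx2⟩, hx3⟩
      have hxs : x ≠ s := by intro h; omega
      have hx4 : x ∈ S \ {s} := ⟨hxS, hxs⟩
      rw [hSdesc] at hx4
      obtain ⟨j, hj1, hj2, hj3⟩ := hx4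
      refine ⟨x - y, by omega, by omega, ⟨j, hj1, hj2, ?_⟩, by ring⟩
      linarith [hj3]
    · rintro ⟨t, ht1, ht2, ⟨j, hj1, hj2, hj3⟩, rfl⟩
      have hx4 : y + t ∈ S \ {s} := by
        rw [hSdesc]
        exact ⟨j, hj1, hj2, by linarith [hj3]⟩
      exact ⟨⟨hx4.1, by omega, by omega⟩, by omega⟩
  by_cases hyb : y = b
  · rw [if_pos hyb]
    by_cases hl0' : l = 0
    · subst hl0'
      have hbs : b = s := by rw [hb]; simp
      have hys : y = s := by rw [hyb, hbs]
      refine ⟨0, le_refl 0, by omega, ?_⟩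
      unfold IsAffProg
      refine ⟨Set.inter_subset_right, ?_⟩
      ext x
      simp only [Set.mem_diff, Set.mem_inter_iff, Set.mem_Ico, Set.mem_singleton_iff,
        Set.mem_setOf_eq]
      constructor
      · rintro ⟨⟨hxS, hx1, hx2⟩, hx3⟩
        exfalso
        have hxs : x ≠ s := fun h => hx3 (by rw [h, hys])
        have hx4 : x ∈ S \ {s} := ⟨hxS, hxs⟩
        rw [hSdesc] at hx4
        obtain ⟨j, hj1, hj2, _⟩ := hx4
        omega
      · rintro ⟨j, hj1, hj2, _⟩
        exact absurd hj2 (by omega)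
    · have hysc : y = s + lpr (l * (ε * q)) p := by rw [hyb, hb, if_neg hl0']
      have hcval : y - s = lpr (l * (ε * q)) p := by linarith [hysc]
      obtain ⟨l', h0, h1, hset⟩ := key p q ε (-1) l (l - 1) l (y - s) y (ε * (p % q))
        hq2 hqp hcop hε (Or.inr rfl) hl0 hl (by omega) (by omega)
        (by ring)
        (by rw [hcval]
            have h2 := dvd_neg.mpr (lpr_dvd_sub p (l * (ε * q)))
            rwa [neg_sub] at h2)
        (by intro G h1 h2; omega)
        (by intro G h1 h2; omega)
        (by intro G h1 h2 h3; omega)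
      refine ⟨l', h0, h1, ?_⟩
      unfold IsAffProg
      refine ⟨Set.inter_subset_right, ?_⟩
      rw [hDS]
      exact hset
  · rw [if_neg hyb]
    have hy' : y = s ∨ y = s + p - q := by
      rcases hy with h | h | h
      · exact Or.inl h
      · exact absurd h hyb
      · exact Or.inr h
    rcases hy' with hys | hyp2
    · obtain ⟨l', h0, h1, hset⟩ := key p q ε 1 l l 0 (y - s) y (-(ε * (p % q)))
        hq2 hqp hcop hε (Or.inl rfl) hl0 hl (by omega) (by omega)
        (by ring)
        (⟨0, by rw [hys]; ring⟩)
        (by intro G h1 h2; omega)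
        (by intro G h1 h2; omega)
        (by intro G h1 h2 h3; omega)
      refine ⟨l', h0, h1, ?_⟩
      unfold IsAffProg
      refine ⟨Set.inter_subset_right, ?_⟩
      rw [hDS]
      exact hset
    · obtain ⟨l', h0, h1, hset⟩ := key p q ε 1 l (l + ε) (-ε) (y - s) y (-(ε * (p % q)))
        hq2 hqp hcop hε (Or.inl rfl) hl0 hl (by omega) (by omega)
        (by ring)
        (by refine ⟨-1, ?_⟩
            rcases hε with rfl | rfl <;> rw [hyp2] <;> ring)
        (by intro G h1 h2; rcases hε with rfl | rfl <;> omega)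
        (by intro G h1 h2; rcases hε with rfl | rfl <;> omega)
        (by intro G h1 h2 h3
            rcases hε with rfl | rfl
            · have h4 := h3 (by norm_num)
              omega
            · omega)
      refine ⟨l', h0, h1, ?_⟩
      unfold IsAffProg
      refine ⟨Set.inter_subset_right, ?_⟩
      rw [hDS]
      exact hset
end
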